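/- Let k be a field of characteristic ≠ 2 and n a positive integer divisible by 4. Then the diagonal symmetric bilinear forms φ_even = ⟨C(n,m) : 0 ≤ m < n/2, m even⟩ and φ_odd = ⟨C(n,m) : 0 ≤ m < n/2, m odd⟩ over k are isomorphic (as symmetric bilinear forms, possibly degenerate). -/

import Mathlib

open Polynomial Finset

namespace PhiIsoAux


/-- `kap j d m` = coefficient of `X^m` in `(1-X)^j (1+X)^d` over `ℤ`
(a Krawtchouk-polynomial value). -/
noncomputable def kap (j d m : ℕ) : ℤ :=
  (((1 - X) ^ j * (1 + X) ^ d : Polynomial ℤ)).coeff m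

lemma kap_cast (R : Type*) [CommRing R] (j d m : ℕ) :
    (((1 - X) ^ j * (1 + X) ^ d : R[X])).coeff m = ((kap j d m : ℤ) : R) := by
  have h : ((1 - X) ^ j * (1 + X) ^ d : R[X]) =
      (((1 - X) ^ j * (1 + X) ^ d : Polynomial ℤ)).map (Int.castRingHom R) := by
    simp [Polynomial.map_mul, Polynomial.map_pow]
  rw [h, Polynomial.coeff_map, kap]
  simp

lemma deg_le (R : Type*) [CommRing R] (j d : ℕ) :
    (((1 - X) ^ j * (1 + X) ^ d : R[X])).natDegree ≤ j + d := by
  refine (natDegree_mul_le).trans (add_le_add ?_ ?_)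
  · refine (natDegree_pow_le).trans ?_
    have : (1 - X : R[X]).natDegree ≤ 1 := by
      refine (natDegree_sub_le _ _).trans ?_
      simp [natDegree_X_le]
    calc j * (1 - X : R[X]).natDegree ≤ j * 1 := Nat.mul_le_mul_left _ this
      _ = j := by ring
  · refine (natDegree_pow_le).trans ?_
    have : (1 + X : R[X]).natDegree ≤ 1 := by
      refine (natDegree_add_le _ _).trans ?_
      simp [natDegree_X_le]
    calc d * (1 + X : R[X]).natDegree ≤ d * 1 := Nat.mul_le_mul_left _ this
      _ = d := by ring

lemma master_step {R : Type*} [CommRing R] (s : R) (f : R[X]) (N : ℕ)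
    (hf : f.natDegree ≤ N) (A B : R) :
    ∑ m ∈ range (N + 1 + 1), ((1 + C s * X) * f).coeff m * (A ^ m * B ^ (N + 1 - m))
      = (B + s * A) * ∑ m ∈ range (N + 1), f.coeff m * (A ^ m * B ^ (N - m)) := by
  have hco : ∀ m, ((1 + C s * X) * f).coeff m = f.coeff m + s * (X * f).coeff m := by
    intro m
    rw [add_mul, one_mul, mul_assoc, coeff_add, coeff_C_mul]
  have split : ∑ m ∈ range (N + 1 + 1), ((1 + C s * X) * f).coeff m * (A ^ m * B ^ (N + 1 - m))
      = (∑ m ∈ range (N + 1 + 1), f.coeff m * (A ^ m * B ^ (N + 1 - m)))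
        + s * ∑ m ∈ range (N + 1 + 1), (X * f).coeff m * (A ^ m * B ^ (N + 1 - m)) := by
    rw [Finset.mul_sum, ← Finset.sum_add_distrib]
    refine Finset.sum_congr rfl fun m _ => ?_
    rw [hco]; ring
  have S1 : ∑ m ∈ range (N + 1 + 1), f.coeff m * (A ^ m * B ^ (N + 1 - m))
      = B * ∑ m ∈ range (N + 1), f.coeff m * (A ^ m * B ^ (N - m)) := by
    rw [Finset.sum_range_succ, coeff_eq_zero_of_natDegree_lt (lt_of_le_of_lt hf (Nat.lt_succ_self N))]
    rw [Finset.mul_sum]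
    simp only [zero_mul, add_zero]
    refine Finset.sum_congr rfl fun m hm => ?_
    have hm' : m ≤ N := Nat.lt_succ_iff.mp (Finset.mem_range.mp hm)
    have : N + 1 - m = (N - m) + 1 := by omega
    rw [this, pow_succ]
    ring
  have S2 : ∑ m ∈ range (N + 1 + 1), (X * f).coeff m * (A ^ m * B ^ (N + 1 - m))
      = A * ∑ m ∈ range (N + 1), f.coeff m * (A ^ m * B ^ (N - m)) := by
    rw [Finset.sum_range_succ']
    have h0 : (X * f).coeff 0 = 0 := by
      rw [mul_coeff_zero]; simp
    rw [h0, Finset.mul_sum]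
    simp only [zero_mul, add_zero]
    refine Finset.sum_congr rfl fun m hm => ?_
    rw [coeff_X_mul]
    have : N + 1 - (m + 1) = N - m := by omega
    rw [this, pow_succ]
    ring
  rw [split, S1, S2]; ring

lemma master {R : Type*} [CommRing R] (j d : ℕ) (A B : R) :
    ∑ m ∈ range (j + d + 1),
        (((1 - X) ^ j * (1 + X) ^ d : R[X])).coeff m * (A ^ m * B ^ (j + d - m))
      = (B - A) ^ j * (B + A) ^ d := by
  induction d with
  | zero =>
    induction j with
    | zero => simp
    | succ j ih =>
      have hrw : ((1 - X) ^ (j+1) * (1 + X) ^ 0 : R[X])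
          = (1 + C (-1 : R) * X) * ((1 - X) ^ j * (1 + X) ^ 0) := by
        rw [pow_succ, map_neg, map_one]
        ring
      have := master_step (-1 : R) ((1 - X) ^ j * (1 + X) ^ 0 : R[X]) (j + 0)
        (deg_le R j 0) A B
      rw [← hrw] at this
      have hidx : j + 1 + 0 + 1 = j + 0 + 1 + 1 := by omega
      rw [hidx]
      have hidx2 : ∀ m, j + 1 + 0 - m = j + 0 + 1 - m := by intro m; omega
      calc ∑ m ∈ range (j + 0 + 1 + 1),
              (((1 - X) ^ (j+1) * (1 + X) ^ 0 : R[X])).coeff m * (A ^ m * B ^ (j + 1 + 0 - m))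
          = ∑ m ∈ range (j + 0 + 1 + 1),
              (((1 - X) ^ (j+1) * (1 + X) ^ 0 : R[X])).coeff m * (A ^ m * B ^ (j + 0 + 1 - m)) := by
            refine Finset.sum_congr rfl fun m _ => by rw [hidx2]
        _ = (B + (-1) * A) * ((B - A) ^ j * (B + A) ^ 0) := by rw [this, ih]
        _ = (B - A) ^ (j + 1) * (B + A) ^ 0 := by ring
  | succ d ih =>
    have hrw : ((1 - X) ^ j * (1 + X) ^ (d+1) : R[X])
        = (1 + C (1 : R) * X) * ((1 - X) ^ j * (1 + X) ^ d) := by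
      rw [pow_succ, map_one]
      ring
    have := master_step (1 : R) ((1 - X) ^ j * (1 + X) ^ d : R[X]) (j + d)
      (deg_le R j d) A B
    rw [← hrw] at this
    have hidx : j + (d + 1) + 1 = j + d + 1 + 1 := by omega
    rw [hidx]
    have hidx2 : ∀ m, j + (d + 1) - m = j + d + 1 - m := by intro m; omega
    calc ∑ m ∈ range (j + d + 1 + 1),
            (((1 - X) ^ j * (1 + X) ^ (d+1) : R[X])).coeff m * (A ^ m * B ^ (j + (d + 1) - m))
        = ∑ m ∈ range (j + d + 1 + 1),
            (((1 - X) ^ j * (1 + X) ^ (d+1) : R[X])).coeff m * (A ^ m * B ^ (j + d + 1 - m)) := by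
          refine Finset.sum_congr rfl fun m _ => by rw [hidx2]
      _ = (B + 1 * A) * ((B - A) ^ j * (B + A) ^ d) := by rw [this, ih]
      _ = (B - A) ^ j * (B + A) ^ (d + 1) := by ring







lemma kap_def (j d m : ℕ) :
    (((1 - X) ^ j * (1 + X) ^ d : Polynomial ℤ)).coeff m = kap j d m := rfl

lemma kap_eq_zero {j d m : ℕ} (h : j + d < m) : kap j d m = 0 :=
  coeff_eq_zero_of_natDegree_lt (lt_of_le_of_lt (deg_le ℤ j d) h)


lemma coeff_intCast_mul (c : ℤ) (p : Polynomial ℤ) (m : ℕ) :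
    ((c : Polynomial ℤ) * p).coeff m = c * p.coeff m := by
  rw [← Polynomial.C_eq_intCast, Polynomial.coeff_C_mul, Int.cast_id]

lemma coeff_intCast_mul_X_pow (c : ℤ) (e m : ℕ) :
    ((c : Polynomial ℤ) * X ^ e).coeff m = if m = e then c else 0 := by
  rw [coeff_intCast_mul, Polynomial.coeff_X_pow, mul_ite, mul_one, mul_zero]

/-- (B): `kap d j m = (-1)^m kap j d m`. -/
lemma kapB (j d m : ℕ) : kap d j m = (-1) ^ m * kap j d m := by
  by_cases h : m ≤ j + d
  · have H := master (R := Polynomial ℤ) j d (-X) 1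
    have H2 := congrArg (fun p => p.coeff m) H
    simp only [Polynomial.finset_sum_coeff] at H2
    have lhs : ∀ m' ∈ range (j + d + 1),
        ((((1 - X) ^ j * (1 + X) ^ d : Polynomial (Polynomial ℤ))).coeff m' *
          ((-X : Polynomial ℤ) ^ m' * (1 : Polynomial ℤ) ^ (j + d - m'))).coeff m
        = if m = m' then kap j d m' * (-1) ^ m' else 0 := by
      intro m' _
      rw [kap_cast]
      have e1 : ((kap j d m' : ℤ) : Polynomial ℤ) * ((-X : Polynomial ℤ) ^ m' * 1 ^ (j + d - m'))
          = ((kap j d m' * (-1) ^ m' : ℤ) : Polynomial ℤ) * X ^ m' := by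
        push_cast; ring
      rw [e1, coeff_intCast_mul_X_pow]
    rw [Finset.sum_congr rfl lhs, Finset.sum_ite_eq (range (j + d + 1)) m
      (fun m' => kap j d m' * (-1) ^ m'), if_pos (Finset.mem_range.mpr (by omega))] at H2
    have rhs : ((1 : Polynomial ℤ) - -X) ^ j * (1 + -X) ^ d = (1 - X) ^ d * (1 + X) ^ j := by ring
    rw [rhs] at H2
    have : ((1 - X : Polynomial ℤ) ^ d * (1 + X) ^ j).coeff m = kap d j m := rfl
    rw [this] at H2
    rw [← H2]; ring
  · rw [kap_eq_zero (by omega), kap_eq_zero (by omega), mul_zero]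

/-- (C): coefficient reflection. -/
lemma kapC (j d m : ℕ) (hm : m ≤ j + d) :
    kap j d (j + d - m) = (-1) ^ j * kap j d m := by
  have H := master (R := Polynomial ℤ) j d 1 X
  have H2 := congrArg (fun p => p.coeff m) H
  simp only [Polynomial.finset_sum_coeff] at H2
  have lhs : ∀ m' ∈ range (j + d + 1),
      ((((1 - X) ^ j * (1 + X) ^ d : Polynomial (Polynomial ℤ))).coeff m' *
        ((1 : Polynomial ℤ) ^ m' * X ^ (j + d - m'))).coeff m
      = if m' = j + d - m then kap j d m' else 0 := by
    intro m' hm'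
    have hm'' : m' ≤ j + d := by have := Finset.mem_range.mp hm'; omega
    rw [kap_cast]
    have e1 : ((kap j d m' : ℤ) : Polynomial ℤ) * ((1 : Polynomial ℤ) ^ m' * X ^ (j + d - m'))
        = ((kap j d m' : ℤ) : Polynomial ℤ) * X ^ (j + d - m') := by push_cast; ring
    rw [e1, coeff_intCast_mul_X_pow]
    have : (m = j + d - m') ↔ (m' = j + d - m) := by omega
    by_cases hc : m' = j + d - m
    · rw [if_pos (this.mpr hc), if_pos hc]
    · rw [if_neg (fun hh => hc (this.mp hh)), if_neg hc]
  rw [Finset.sum_congr rfl lhs, Finset.sum_ite_eq' (range (j + d + 1)) (j + d - m) (kap j d),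
    if_pos (Finset.mem_range.mpr (by omega))] at H2
  have rhs : ((X : Polynomial ℤ) - 1) ^ j * (X + 1) ^ d
      = (((-1) ^ j : ℤ) : Polynomial ℤ) * ((1 - X) ^ j * (1 + X) ^ d) := by
    rw [show ((X : Polynomial ℤ) - 1) = -(1 - X) from by ring, neg_pow]
    push_cast; ring
  rw [rhs, coeff_intCast_mul, kap_def] at H2
  exact H2

/-- (A1): unsigned `K²`-type identity. -/
lemma kapA1 (j d s : ℕ) :
    ∑ m ∈ range (j + d + 1), kap j d m * kap m (j + d - m) s
      = if s = j then 2 ^ (j + d) else 0 := by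
  have H := master (R := Polynomial ℤ) j d (1 - X) (1 + X)
  have H2 := congrArg (fun p => p.coeff s) H
  simp only [Polynomial.finset_sum_coeff] at H2
  have lhs : ∀ m' ∈ range (j + d + 1),
      ((((1 - X) ^ j * (1 + X) ^ d : Polynomial (Polynomial ℤ))).coeff m' *
        ((1 - X : Polynomial ℤ) ^ m' * (1 + X) ^ (j + d - m'))).coeff s
      = kap j d m' * kap m' (j + d - m') s := by
    intro m' _
    rw [kap_cast, coeff_intCast_mul, kap_def]
  have rhs : ((1 + X : Polynomial ℤ) - (1 - X)) ^ j * ((1 + X) + (1 - X)) ^ d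
      = (((2 : ℤ) ^ (j + d) : ℤ) : Polynomial ℤ) * X ^ j := by push_cast; ring
  rw [Finset.sum_congr rfl lhs, rhs, coeff_intCast_mul_X_pow] at H2
  exact H2

/-- (A2): signed `K²`-type identity. -/
lemma kapA2 (j d s : ℕ) :
    ∑ m ∈ range (j + d + 1), (-1) ^ m * (kap j d m * kap m (j + d - m) s)
      = if s = d then 2 ^ (j + d) else 0 := by
  have H := master (R := Polynomial ℤ) j d (X - 1) (1 + X)
  have H2 := congrArg (fun p => p.coeff s) H
  simp only [Polynomial.finset_sum_coeff] at H2
  have lhs : ∀ m' ∈ range (j + d + 1),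
      ((((1 - X) ^ j * (1 + X) ^ d : Polynomial (Polynomial ℤ))).coeff m' *
        ((X - 1 : Polynomial ℤ) ^ m' * (1 + X) ^ (j + d - m'))).coeff s
      = (-1) ^ m' * (kap j d m' * kap m' (j + d - m') s) := by
    intro m' _
    rw [kap_cast]
    have e1 : ((kap j d m' : ℤ) : Polynomial ℤ) * ((X - 1 : Polynomial ℤ) ^ m' * (1 + X) ^ (j + d - m'))
        = (((-1) ^ m' * kap j d m' : ℤ) : Polynomial ℤ) * ((1 - X) ^ m' * (1 + X) ^ (j + d - m')) := by
      rw [show ((X : Polynomial ℤ) - 1) = -(1 - X) from by ring, neg_pow]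
      push_cast; ring
    rw [e1, coeff_intCast_mul, kap_def]; ring
  have rhs : ((1 + X : Polynomial ℤ) - (X - 1)) ^ j * ((1 + X) + (X - 1)) ^ d
      = (((2 : ℤ) ^ (j + d) : ℤ) : Polynomial ℤ) * X ^ d := by push_cast; ring
  rw [Finset.sum_congr rfl lhs, rhs, coeff_intCast_mul_X_pow] at H2
  exact H2








section Bivariate

abbrev S := Polynomial (Polynomial ℤ)

noncomputable def Fx (n j : ℕ) : S := C ((1 - X) ^ j * (1 + X) ^ (n - j) : Polynomial ℤ)

noncomputable def Gy (n j : ℕ) : S := (1 - X) ^ j * (1 + X) ^ (n - j)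

/-- (P1): unsigned orthogonality of Krawtchouk vectors. -/
lemma kapP1 (n m m' : ℕ) (hm : m ≤ n) (hm' : m' ≤ n) :
    ∑ j ∈ range (n + 1), (n.choose j : ℤ) * kap j (n - j) m * kap j (n - j) m'
      = if m = m' then 2 ^ n * (n.choose m : ℤ) else 0 := by
  have claim : ∑ j ∈ range (n + 1), Fx n j * Gy n j * (n.choose j : S)
      = ∑ i ∈ range (n + 1), 2 ^ n * ((C (X : Polynomial ℤ) * X) ^ i * 1 ^ (n - i) * (n.choose i : S)) := by
    have hab := add_pow ((1 - C (X : Polynomial ℤ)) * (1 - X)) ((1 + C (X : Polynomial ℤ)) * (1 + X)) n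
    have habs : ((1 - C (X : Polynomial ℤ)) * (1 - X)) + ((1 + C (X : Polynomial ℤ)) * (1 + X))
        = 2 * (1 + C (X : Polynomial ℤ) * X) := by ring
    have lhs1 : ∀ j ∈ range (n + 1), Fx n j * Gy n j * (n.choose j : S)
        = ((1 - C (X : Polynomial ℤ)) * (1 - X)) ^ j * ((1 + C (X : Polynomial ℤ)) * (1 + X)) ^ (n - j)
          * (n.choose j : S) := by
      intro j hj
      have hj' : j ≤ n := by have := Finset.mem_range.mp hj; omega
      have e1 : Fx n j = (1 - C (X : Polynomial ℤ)) ^ j * (1 + C (X : Polynomial ℤ)) ^ (n - j) := by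
        rw [Fx, map_mul, map_pow, map_pow, map_sub, map_add, map_one]
      rw [e1, Gy, mul_pow, mul_pow]
      ring
    rw [Finset.sum_congr rfl lhs1, ← hab, habs, mul_pow]
    rw [show ((1:S) + C (X : Polynomial ℤ) * X) = C (X : Polynomial ℤ) * X + 1 from add_comm _ _,
      add_pow, Finset.mul_sum]
  have H2 := congrArg (fun p => (p.coeff m').coeff m) claim
  simp only [Polynomial.finset_sum_coeff] at H2
  have lhs2 : ∀ j ∈ range (n + 1),
      ((Fx n j * Gy n j * (n.choose j : S)).coeff m').coeff m
        = (n.choose j : ℤ) * kap j (n - j) m * kap j (n - j) m' := by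
    intro j _
    have e1 : Fx n j * Gy n j * (n.choose j : S)
        = C ((((n.choose j : ℤ)) : Polynomial ℤ) * ((1 - X) ^ j * (1 + X) ^ (n - j))) * Gy n j := by
      simp only [Fx, map_mul, Polynomial.C_eq_intCast]
      push_cast
      ring
    rw [e1, Polynomial.coeff_C_mul, Gy, kap_cast (R := Polynomial ℤ)]
    have e2 : ((((n.choose j : ℤ)) : Polynomial ℤ) * ((1 - X) ^ j * (1 + X) ^ (n - j)))
          * ((kap j (n - j) m' : ℤ) : Polynomial ℤ)
        = (((n.choose j : ℤ) * kap j (n - j) m' : ℤ) : Polynomial ℤ)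
          * ((1 - X) ^ j * (1 + X) ^ (n - j)) := by
      push_cast; ring
    rw [e2, coeff_intCast_mul, kap_def]
    ring
  have rhs2 : ∀ i ∈ range (n + 1),
      ((2 ^ n * ((C (X : Polynomial ℤ) * X) ^ i * 1 ^ (n - i) * (n.choose i : S))).coeff m').coeff m
        = if m' = i then (if m = i then 2 ^ n * (n.choose i : ℤ) else 0) else 0 := by
    intro i _
    have e3 : 2 ^ n * ((C (X : Polynomial ℤ) * X) ^ i * 1 ^ (n - i) * (n.choose i : S))
        = C (((2 ^ n * n.choose i : ℤ) : Polynomial ℤ) * X ^ i) * X ^ i := by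
      simp only [map_mul, map_pow, Polynomial.C_eq_intCast]
      push_cast
      ring
    rw [e3, Polynomial.coeff_C_mul, Polynomial.coeff_X_pow, mul_ite, mul_one, mul_zero,
      apply_ite (fun q : Polynomial ℤ => q.coeff m), Polynomial.coeff_zero,
      coeff_intCast_mul_X_pow]
  rw [Finset.sum_congr rfl lhs2, Finset.sum_congr rfl rhs2,
    Finset.sum_ite_eq (range (n + 1)) m' (fun i => if m = i then 2 ^ n * (n.choose i : ℤ) else 0),
    if_pos (Finset.mem_range.mpr (by omega))] at H2
  rw [H2]
  by_cases h : m = m'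
  · subst h; simp
  · rw [if_neg (fun hh => h hh), if_neg h]

/-- (P2): signed orthogonality of Krawtchouk vectors. -/
lemma kapP2 (n m m' : ℕ) (hm : m ≤ n) (hm' : m' ≤ n) :
    ∑ j ∈ range (n + 1), (-1) ^ j * ((n.choose j : ℤ) * kap j (n - j) m * kap j (n - j) m')
      = if m + m' = n then 2 ^ n * (n.choose m : ℤ) else 0 := by
  have claim : ∑ j ∈ range (n + 1), (-1) ^ j * (Fx n j * Gy n j) * (n.choose j : S)
      = ∑ i ∈ range (n + 1), 2 ^ n * ((C (X : Polynomial ℤ)) ^ i * X ^ (n - i) * (n.choose i : S)) := by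
    have hab := add_pow (-((1 - C (X : Polynomial ℤ)) * (1 - X))) ((1 + C (X : Polynomial ℤ)) * (1 + X)) n
    have habs : -((1 - C (X : Polynomial ℤ)) * (1 - X)) + ((1 + C (X : Polynomial ℤ)) * (1 + X))
        = 2 * (C (X : Polynomial ℤ) + X) := by ring
    have lhs1 : ∀ j ∈ range (n + 1), (-1) ^ j * (Fx n j * Gy n j) * (n.choose j : S)
        = (-((1 - C (X : Polynomial ℤ)) * (1 - X))) ^ j * ((1 + C (X : Polynomial ℤ)) * (1 + X)) ^ (n - j)
          * (n.choose j : S) := by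
      intro j hj
      have e1 : Fx n j = (1 - C (X : Polynomial ℤ)) ^ j * (1 + C (X : Polynomial ℤ)) ^ (n - j) := by
        rw [Fx, map_mul, map_pow, map_pow, map_sub, map_add, map_one]
      have eneg : (-((1 - C (X : Polynomial ℤ)) * (1 - X))) ^ j
          = (-1) ^ j * ((1 - C (X : Polynomial ℤ)) ^ j * (1 - X) ^ j) := by
        rw [show (-((1 - C (X : Polynomial ℤ)) * (1 - X)) : S)
            = (-1) * ((1 - C (X : Polynomial ℤ)) * (1 - X)) from by ring, mul_pow, mul_pow]
      have epos : ((1 + C (X : Polynomial ℤ)) * (1 + X)) ^ (n - j)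
          = (1 + C (X : Polynomial ℤ)) ^ (n - j) * (1 + X) ^ (n - j) := mul_pow _ _ _
      rw [e1, Gy, eneg, epos]
      ring
    rw [Finset.sum_congr rfl lhs1, ← hab, habs, mul_pow, add_pow, Finset.mul_sum]
  have H2 := congrArg (fun p => (p.coeff m').coeff m) claim
  simp only [Polynomial.finset_sum_coeff] at H2
  have lhs2 : ∀ j ∈ range (n + 1),
      (((-1) ^ j * (Fx n j * Gy n j) * (n.choose j : S)).coeff m').coeff m
        = (-1) ^ j * ((n.choose j : ℤ) * kap j (n - j) m * kap j (n - j) m') := by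
    intro j _
    have e1 : (-1) ^ j * (Fx n j * Gy n j) * (n.choose j : S)
        = C ((((-1) ^ j * (n.choose j : ℤ) : ℤ) : Polynomial ℤ) * ((1 - X) ^ j * (1 + X) ^ (n - j)))
            * Gy n j := by
      simp only [Fx, map_mul, Polynomial.C_eq_intCast]
      push_cast
      ring
    rw [e1, Polynomial.coeff_C_mul, Gy, kap_cast (R := Polynomial ℤ)]
    have e2 : ((((-1) ^ j * (n.choose j : ℤ) : ℤ) : Polynomial ℤ) * ((1 - X) ^ j * (1 + X) ^ (n - j)))
          * ((kap j (n - j) m' : ℤ) : Polynomial ℤ)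
        = ((((-1) ^ j * (n.choose j : ℤ)) * kap j (n - j) m' : ℤ) : Polynomial ℤ)
          * ((1 - X) ^ j * (1 + X) ^ (n - j)) := by
      push_cast; ring
    rw [e2, coeff_intCast_mul, kap_def]
    ring
  have rhs2 : ∀ i ∈ range (n + 1),
      ((2 ^ n * ((C (X : Polynomial ℤ)) ^ i * X ^ (n - i) * (n.choose i : S))).coeff m').coeff m
        = if m' = n - i then (if m = i then 2 ^ n * (n.choose i : ℤ) else 0) else 0 := by
    intro i _
    have e3 : 2 ^ n * ((C (X : Polynomial ℤ)) ^ i * X ^ (n - i) * (n.choose i : S))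
        = C (((2 ^ n * n.choose i : ℤ) : Polynomial ℤ) * X ^ i) * X ^ (n - i) := by
      simp only [map_mul, map_pow, Polynomial.C_eq_intCast]
      push_cast
      ring
    rw [e3, Polynomial.coeff_C_mul, Polynomial.coeff_X_pow, mul_ite, mul_one, mul_zero,
      apply_ite (fun q : Polynomial ℤ => q.coeff m), Polynomial.coeff_zero,
      coeff_intCast_mul_X_pow]
  rw [Finset.sum_congr rfl lhs2, Finset.sum_congr rfl rhs2] at H2
  have h0 : ∀ b ∈ range (n + 1), b ≠ n - m' →
      (if m' = n - b then (if m = b then 2 ^ n * (n.choose b : ℤ) else 0) else 0) = 0 := by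
    intro b hb hbne
    have hb' : b ≤ n := by have := Finset.mem_range.mp hb; omega
    have : ¬ m' = n - b := by omega
    rw [if_neg this]
  have h1 : n - m' ∉ range (n + 1) →
      (if m' = n - (n - m') then (if m = n - m' then 2 ^ n * (n.choose (n - m') : ℤ) else 0) else 0) = 0 :=
    fun hh => absurd (Finset.mem_range.mpr (by omega)) hh
  have hs := Finset.sum_eq_single (n - m') h0 h1
  rw [hs, if_pos (by omega : m' = n - (n - m'))] at H2
  rw [H2]
  by_cases h : m + m' = n
  · rw [if_pos (by omega : m = n - m'), if_pos h]
    have : n - m' = m := by omega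
    rw [this]
  · rw [if_neg (by omega : ¬ m = n - m'), if_neg h]


end Bivariate





lemma sum_even_odd (N : ℕ) (f : ℕ → ℤ) :
    ∑ j ∈ range (2 * N + 1), f j
      = ∑ i ∈ range (N + 1), f (2 * i) + ∑ i ∈ range N, f (2 * i + 1) := by
  induction N with
  | zero => simp
  | succ N ih =>
    have e1 : 2 * (N + 1) + 1 = (2 * N + 1) + 1 + 1 := by omega
    rw [e1, Finset.sum_range_succ, Finset.sum_range_succ, ih,
      Finset.sum_range_succ (fun i => f (2 * i)) (N + 1),
      Finset.sum_range_succ (fun i => f (2 * i + 1)) N]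
    have e2 : 2 * (N + 1) = 2 * N + 1 + 1 := by omega
    rw [e2]
    ring

lemma fold_even (t : ℕ) (g : ℕ → ℤ) (hsym : ∀ i, i ≤ 2 * t → g (2 * t - i) = g i)
    (hmid : g t = 0) :
    ∑ i ∈ range (2 * t + 1), g i = 2 * ∑ i ∈ range t, g i := by
  rw [show 2 * t + 1 = t + (t + 1) from by omega, Finset.sum_range_add]
  rw [Finset.sum_range_succ' (fun i => g (t + i)) t]
  have h0 : g (t + 0) = 0 := by rw [Nat.add_zero]; exact hmid
  have hrefl := Finset.sum_range_reflect (fun i => g (t + (i + 1))) t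
  have hcong : ∑ j ∈ range t, g (t + (t - 1 - j + 1)) = ∑ j ∈ range t, g j := by
    refine Finset.sum_congr rfl fun j hj => ?_
    have hj' : j < t := Finset.mem_range.mp hj
    have e : t + (t - 1 - j + 1) = 2 * t - j := by omega
    rw [e, hsym j (by omega)]
  rw [h0, ← hrefl, hcong]
  ring

lemma fold_odd (t : ℕ) (g : ℕ → ℤ) (hsym : ∀ i, i < 2 * t → g (2 * t - 1 - i) = g i) :
    ∑ i ∈ range (2 * t), g i = 2 * ∑ i ∈ range t, g i := by
  rcases Nat.eq_zero_or_pos t with rfl | ht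
  · simp
  rw [show 2 * t = t + t from by omega, Finset.sum_range_add]
  have hrefl := Finset.sum_range_reflect (fun i => g (t + i)) t
  have hcong : ∑ j ∈ range t, g (t + (t - 1 - j)) = ∑ j ∈ range t, g j := by
    refine Finset.sum_congr rfl fun j hj => ?_
    have hj' : j < t := Finset.mem_range.mp hj
    have e : t + (t - 1 - j) = 2 * t - 1 - j := by omega
    rw [e, hsym j (by omega)]
  rw [← hrefl, hcong]
  ring

/-- The key integer identity (P): weighted orthogonality of the odd Krawtchouk
columns over even rows `< n/2`. -/
lemma intP (t : ℕ) (r r' : ℕ) (hr : r < t) (hr' : r' < t) :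
    ∑ i ∈ range t, ((4 * t).choose (2 * i) : ℤ)
        * kap (2 * i) (4 * t - 2 * i) (2 * r + 1) * kap (2 * i) (4 * t - 2 * i) (2 * r' + 1)
      = if r = r' then 2 ^ (4 * t - 2) * ((4 * t).choose (2 * r + 1) : ℤ) else 0 := by
  set n := 4 * t with hn
  set m := 2 * r + 1 with hmdef
  set m' := 2 * r' + 1 with hmdef'
  have hm : m ≤ n := by omega
  have hm' : m' ≤ n := by omega
  set F : ℕ → ℤ := fun j => (n.choose j : ℤ) * kap j (n - j) m * kap j (n - j) m' with hF
  have HP1 : ∑ j ∈ range (n + 1), F j = if m = m' then 2 ^ n * (n.choose m : ℤ) else 0 :=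
    kapP1 n m m' hm hm'
  have HP2 : ∑ j ∈ range (n + 1), (-1) ^ j * F j = 0 := by
    have := kapP2 n m m' hm hm'
    rw [if_neg (by omega : ¬ m + m' = n)] at this
    calc ∑ j ∈ range (n + 1), (-1) ^ j * F j
        = ∑ j ∈ range (n + 1), (-1) ^ j * ((n.choose j : ℤ) * kap j (n - j) m * kap j (n - j) m') := rfl
      _ = 0 := this
  have hsplit1 := sum_even_odd (2 * t) F
  have hsplit2 := sum_even_odd (2 * t) (fun j => (-1) ^ j * F j)
  have heven : ∀ i : ℕ, ((-1 : ℤ)) ^ (2 * i) = 1 := fun i => Even.neg_one_pow ⟨i, by ring⟩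
  have hodd : ∀ i : ℕ, ((-1 : ℤ)) ^ (2 * i + 1) = -1 := fun i => Odd.neg_one_pow ⟨i, by ring⟩
  have hsplit2' : ∑ j ∈ range (2 * (2 * t) + 1), (-1) ^ j * F j
      = ∑ i ∈ range (2 * t + 1), F (2 * i) - ∑ i ∈ range (2 * t), F (2 * i + 1) := by
    rw [hsplit2]
    rw [Finset.sum_congr rfl (fun i (_ : i ∈ range (2 * t + 1)) => by rw [heven i, one_mul]),
      Finset.sum_congr rfl (fun i (_ : i ∈ range (2 * t)) => by rw [hodd i, neg_one_mul])]
    rw [Finset.sum_neg_distrib]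
    ring
  have hrange : n + 1 = 2 * (2 * t) + 1 := by omega
  have hE : 2 * ∑ i ∈ range (2 * t + 1), F (2 * i)
      = if m = m' then 2 ^ n * (n.choose m : ℤ) else 0 := by
    rw [← HP1, hrange, hsplit1]
    have := hsplit2'
    rw [hrange] at HP2
    rw [HP2] at this
    linarith [this]
  -- fold the even sum
  have hFsym : ∀ i, i ≤ 2 * t → F (2 * (2 * t - i)) = F (2 * i) := by
    intro i hi
    have e1 : 2 * (2 * t - i) = n - 2 * i := by omega
    have e2 : n - (n - 2 * i) = 2 * i := by omega
    have e3 : (n.choose (n - 2 * i) : ℤ) = (n.choose (2 * i) : ℤ) := by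
      rw [Nat.choose_symm (by omega : 2 * i ≤ n)]
    have e4 : kap (n - 2 * i) (n - (n - 2 * i)) m = (-1) ^ m * kap (2 * i) (n - 2 * i) m := by
      rw [e2]; exact kapB (2 * i) (n - 2 * i) m
    have e5 : kap (n - 2 * i) (n - (n - 2 * i)) m' = (-1) ^ m' * kap (2 * i) (n - 2 * i) m' := by
      rw [e2]; exact kapB (2 * i) (n - 2 * i) m'
    rw [hF]
    simp only [e1, e3, e4, e5]
    simp only [hmdef, hmdef', hodd r, hodd r']
    ring
  have hFmid : F (2 * t) = 0 := by
    have hk : kap (2 * t) (2 * t) m = 0 := by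
      have hb := kapB (2 * t) (2 * t) m
      rw [hmdef, hodd r] at hb
      linarith
    have e : n - 2 * t = 2 * t := by omega
    rw [hF]
    simp only [e, hk, mul_zero, zero_mul]
  have hFmid' : (fun i => F (2 * i)) t = 0 := by
    simp only []
    exact hFmid
  have hfold := fold_even t (fun i => F (2 * i))
    (fun i hi => hFsym i hi) hFmid'
  rw [hfold] at hE
  -- conclude
  have hgoal : ∀ i ∈ range t, ((4 * t).choose (2 * i) : ℤ)
        * kap (2 * i) (4 * t - 2 * i) (2 * r + 1) * kap (2 * i) (4 * t - 2 * i) (2 * r' + 1)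
      = F (2 * i) := fun i _ => rfl
  rw [Finset.sum_congr rfl hgoal]
  have h2n : (2 : ℤ) ^ n = 4 * 2 ^ (n - 2) := by
    have e : n - 2 + 2 = n := by omega
    conv_lhs => rw [← e]
    rw [pow_add]
    ring
  by_cases hrr : r = r'
  · subst hrr
    rw [if_pos rfl] at hE ⊢
    rw [h2n] at hE
    have : (4 : ℤ) * ∑ i ∈ range t, F (2 * i) = 4 * (2 ^ (n - 2) * (n.choose m : ℤ)) := by
      linarith
    have h4 : (4 : ℤ) ≠ 0 := by norm_num
    have := mul_left_cancel₀ h4 this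
    rw [this]
  · rw [if_neg (by omega : ¬ m = m')] at hE
    rw [if_neg hrr]
    linarith

/-- The key integer identity (Q): the two scaled Krawtchouk blocks are mutually
inverse. -/
lemma intQ (t i i' : ℕ) (hi : i < t) (hi' : i' < t) :
    ∑ r ∈ range t, kap (2 * i) (4 * t - 2 * i) (2 * r + 1)
        * kap (2 * r + 1) (4 * t - (2 * r + 1)) (2 * i')
      = if i = i' then 2 ^ (4 * t - 2) else 0 := by
  set n := 4 * t with hn
  set j := 2 * i with hjdef
  set s := 2 * i' with hsdef
  have hjn : j ≤ n := by omega
  have hjd : j + (n - j) = n := by omega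
  set G : ℕ → ℤ := fun m => kap j (n - j) m * kap m (n - m) s with hG
  have heven : ∀ a : ℕ, ((-1 : ℤ)) ^ (2 * a) = 1 := fun a => Even.neg_one_pow ⟨a, by ring⟩
  have hodd : ∀ a : ℕ, ((-1 : ℤ)) ^ (2 * a + 1) = -1 := fun a => Odd.neg_one_pow ⟨a, by ring⟩
  have HA1 : ∑ m ∈ range (n + 1), G m = if s = j then 2 ^ n else 0 := by
    have h := kapA1 j (n - j) s
    simp only [hjd] at h
    exact h
  have HA2 : ∑ m ∈ range (n + 1), (-1) ^ m * G m = 0 := by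
    have h := kapA2 j (n - j) s
    simp only [hjd] at h
    rw [if_neg (by omega : ¬ s = n - j)] at h
    exact h
  have hsplit1 := sum_even_odd (2 * t) G
  have hsplit2 := sum_even_odd (2 * t) (fun m => (-1) ^ m * G m)
  have hsplit2' : ∑ m ∈ range (2 * (2 * t) + 1), (-1) ^ m * G m
      = ∑ a ∈ range (2 * t + 1), G (2 * a) - ∑ a ∈ range (2 * t), G (2 * a + 1) := by
    rw [hsplit2]
    rw [Finset.sum_congr rfl (fun a (_ : a ∈ range (2 * t + 1)) => by rw [heven a, one_mul]),
      Finset.sum_congr rfl (fun a (_ : a ∈ range (2 * t)) => by rw [hodd a, neg_one_mul])]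
    rw [Finset.sum_neg_distrib]
    ring
  have hrange : n + 1 = 2 * (2 * t) + 1 := by omega
  have hO : 2 * ∑ a ∈ range (2 * t), G (2 * a + 1) = if s = j then 2 ^ n else 0 := by
    rw [← HA1, hrange, hsplit1]
    have h2 := hsplit2'
    rw [← hrange, HA2] at h2
    linarith
  have hGsym : ∀ a, a < 2 * t → G (2 * (2 * t - 1 - a) + 1) = G (2 * a + 1) := by
    intro a ha
    set m := 2 * a + 1 with hmdef
    have e1 : 2 * (2 * t - 1 - a) + 1 = n - m := by omega
    have hmn : m ≤ n := by omega
    have e2 : n - (n - m) = m := by omega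
    have eC : kap j (n - j) (n - m) = (-1) ^ j * kap j (n - j) m := by
      have h := kapC j (n - j) m (by omega)
      simp only [hjd] at h
      exact h
    have eB : kap (n - m) (n - (n - m)) s = (-1) ^ s * kap m (n - m) s := by
      rw [e2]; exact kapB m (n - m) s
    rw [hG]
    simp only [e1, eC, eB]
    simp only [hjdef, hsdef, heven i, heven i']
    ring
  have hfold := fold_odd t (fun a => G (2 * a + 1)) (fun a ha => hGsym a ha)
  rw [hfold] at hO
  have hgoal : ∀ r ∈ range t, kap (2 * i) (4 * t - 2 * i) (2 * r + 1)
        * kap (2 * r + 1) (4 * t - (2 * r + 1)) (2 * i')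
      = G (2 * r + 1) := fun r _ => rfl
  rw [Finset.sum_congr rfl hgoal]
  have h2n : (2 : ℤ) ^ n = 4 * 2 ^ (n - 2) := by
    have e : n - 2 + 2 = n := by omega
    conv_lhs => rw [← e]
    rw [pow_add]
    ring
  by_cases hii : i = i'
  · subst hii
    rw [if_pos rfl] at hO
    rw [if_pos rfl, h2n] at *
    have h4 : (4 : ℤ) ≠ 0 := by norm_num
    have : (4 : ℤ) * ∑ a ∈ range t, G (2 * a + 1) = 4 * 2 ^ (n - 2) := by linarith
    exact mul_left_cancel₀ h4 this
  · rw [if_neg (by omega : ¬ s = j)] at hO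
    rw [if_neg hii]
    linarith

end PhiIsoAux

open PhiIsoAux


/-- Theorem B, case `4 ∣ n`: over a field of characteristic ≠ 2, the diagonal
symmetric bilinear forms `⟨C(n,m) : 0 ≤ m < n/2, m even⟩` and
`⟨C(n,m) : 0 ≤ m < n/2, m odd⟩` are isomorphic. -/
theorem phi_even_iso_phi_odd_four_dvd (k : Type*) [Field k]
    (hchar : (2 : k) ≠ 0) (n : ℕ) (hn : 0 < n) (h4 : 4 ∣ n) :
    ∃ e : (Fin (n / 4) → k) ≃ₗ[k] (Fin (n / 4) → k),
      ∀ x y : Fin (n / 4) → k,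
        ∑ i : Fin (n / 4), (n.choose (2 * (i : ℕ)) : k) * e x i * e y i =
          ∑ i : Fin (n / 4), (n.choose (2 * (i : ℕ) + 1) : k) * x i * y i := by
  obtain ⟨t, rfl⟩ := h4
  have ht : 0 < t := by omega
  have ht4 : 4 * t / 4 = t := by omega
  rw [ht4]
  set c : k := (2 : k) ^ (2 * t - 1) with hc
  have hcne : c ≠ 0 := pow_ne_zero _ hchar
  have hcc : (2 : k) ^ (4 * t - 2) = c * c := by
    rw [hc, ← pow_add]
    congr 1
    omega
  have hunit : (2 : k) ^ (4 * t - 2) * (c⁻¹ * c⁻¹) = 1 := by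
    rw [hcc]
    field_simp
  set Ne : Matrix (Fin t) (Fin t) k :=
    Matrix.of (fun i r : Fin t =>
      ((kap (2 * (i : ℕ)) (4 * t - 2 * (i : ℕ)) (2 * (r : ℕ) + 1) : ℤ) : k) * c⁻¹) with hNe
  set Me : Matrix (Fin t) (Fin t) k :=
    Matrix.of (fun r i : Fin t =>
      ((kap (2 * (r : ℕ) + 1) (4 * t - (2 * (r : ℕ) + 1)) (2 * (i : ℕ)) : ℤ) : k) * c⁻¹) with hMe
  have hNeMe : Ne * Me = 1 := by
    ext i i'
    rw [Matrix.mul_apply, Matrix.one_apply]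
    calc ∑ r : Fin t, Ne i r * Me r i'
        = ∑ r : Fin t,
            ((kap (2 * (i : ℕ)) (4 * t - 2 * (i : ℕ)) (2 * (r : ℕ) + 1)
              * kap (2 * (r : ℕ) + 1) (4 * t - (2 * (r : ℕ) + 1)) (2 * (i' : ℕ)) : ℤ) : k)
              * (c⁻¹ * c⁻¹) := by
          refine Finset.sum_congr rfl fun r _ => ?_
          rw [hNe, hMe]
          simp only [Matrix.of_apply]
          push_cast
          ring
      _ = ((∑ r ∈ range t, kap (2 * (i : ℕ)) (4 * t - 2 * (i : ℕ)) (2 * r + 1)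
              * kap (2 * r + 1) (4 * t - (2 * r + 1)) (2 * (i' : ℕ)) : ℤ) : k) * (c⁻¹ * c⁻¹) := by
          rw [← Finset.sum_mul]
          congr 1
          push_cast
          rw [← Fin.sum_univ_eq_sum_range]
      _ = (if i = i' then 1 else 0) := by
          rw [intQ t (i : ℕ) (i' : ℕ) i.isLt i'.isLt]
          by_cases h : i = i'
          · rw [if_pos (by rw [h]), if_pos h]
            push_cast
            exact hunit
          · rw [if_neg (fun hh => h (Fin.ext hh)), if_neg h]
            push_cast
            ring
  have hMeNe : Me * Ne = 1 := mul_eq_one_comm.mp hNeMe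
  refine ⟨LinearEquiv.ofLinear Ne.mulVecLin Me.mulVecLin
    (by rw [← Matrix.mulVecLin_mul, hNeMe, Matrix.mulVecLin_one])
    (by rw [← Matrix.mulVecLin_mul, hMeNe, Matrix.mulVecLin_one]), ?_⟩
  intro x y
  have happ : ∀ z : Fin t → k, ∀ i : Fin t,
      (LinearEquiv.ofLinear Ne.mulVecLin Me.mulVecLin
        (by rw [← Matrix.mulVecLin_mul, hNeMe, Matrix.mulVecLin_one])
        (by rw [← Matrix.mulVecLin_mul, hMeNe, Matrix.mulVecLin_one]) : (Fin t → k) ≃ₗ[k] (Fin t → k)) z i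
      = ∑ r : Fin t, Ne i r * z r := by
    intro z i
    rw [LinearEquiv.ofLinear_apply, Matrix.mulVecLin_apply]
    rfl
  rw [Finset.sum_congr rfl (fun i (_ : i ∈ Finset.univ) => by rw [happ x i, happ y i])]
  -- key inner orthogonality
  have key1 : ∀ r r' : Fin t,
      ∑ i : Fin t, ((4 * t).choose (2 * (i : ℕ)) : k) * (Ne i r * Ne i r')
        = if r = r' then ((4 * t).choose (2 * (r : ℕ) + 1) : k) else 0 := by
    intro r r'
    calc ∑ i : Fin t, ((4 * t).choose (2 * (i : ℕ)) : k) * (Ne i r * Ne i r')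
        = ∑ i : Fin t,
            ((((4 * t).choose (2 * (i : ℕ)) : ℤ)
              * kap (2 * (i : ℕ)) (4 * t - 2 * (i : ℕ)) (2 * (r : ℕ) + 1)
              * kap (2 * (i : ℕ)) (4 * t - 2 * (i : ℕ)) (2 * (r' : ℕ) + 1) : ℤ) : k)
              * (c⁻¹ * c⁻¹) := by
          refine Finset.sum_congr rfl fun i _ => ?_
          rw [hNe]
          simp only [Matrix.of_apply]
          push_cast
          ring
      _ = ((∑ i ∈ range t, ((4 * t).choose (2 * i) : ℤ)
              * kap (2 * i) (4 * t - 2 * i) (2 * (r : ℕ) + 1)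
              * kap (2 * i) (4 * t - 2 * i) (2 * (r' : ℕ) + 1) : ℤ) : k) * (c⁻¹ * c⁻¹) := by
          rw [← Finset.sum_mul]
          congr 1
          push_cast
          rw [← Fin.sum_univ_eq_sum_range]
      _ = (if r = r' then ((4 * t).choose (2 * (r : ℕ) + 1) : k) else 0) := by
          rw [intP t (r : ℕ) (r' : ℕ) r.isLt r'.isLt]
          by_cases h : r = r'
          · rw [if_pos (by rw [h]), if_pos h]
            push_cast
            rw [mul_comm ((2:k) ^ (4 * t - 2)) _, mul_assoc, hunit, mul_one]
          · rw [if_neg (fun hh => h (Fin.ext hh)), if_neg h]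
            push_cast
            ring
  calc ∑ i : Fin t, ((4 * t).choose (2 * (i : ℕ)) : k)
          * (∑ r : Fin t, Ne i r * x r) * (∑ r : Fin t, Ne i r * y r)
      = ∑ i : Fin t, ∑ r : Fin t, ∑ r' : Fin t,
          (((4 * t).choose (2 * (i : ℕ)) : k) * (Ne i r * Ne i r')) * (x r * y r') := by
        refine Finset.sum_congr rfl fun i _ => ?_
        rw [mul_assoc, Finset.sum_mul_sum, Finset.mul_sum]
        refine Finset.sum_congr rfl fun r _ => ?_
        rw [Finset.mul_sum]
        refine Finset.sum_congr rfl fun r' _ => ?_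
        ring
    _ = ∑ r : Fin t, ∑ r' : Fin t, (∑ i : Fin t,
          ((4 * t).choose (2 * (i : ℕ)) : k) * (Ne i r * Ne i r')) * (x r * y r') := by
        rw [Finset.sum_comm]
        refine Finset.sum_congr rfl fun r _ => ?_
        rw [Finset.sum_comm]
        refine Finset.sum_congr rfl fun r' _ => ?_
        rw [Finset.sum_mul]
    _ = ∑ r : Fin t, ((4 * t).choose (2 * (r : ℕ) + 1) : k) * x r * y r := by
        refine Finset.sum_congr rfl fun r _ => ?_
        rw [Finset.sum_congr rfl (fun r' (_ : r' ∈ Finset.univ) => by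
          rw [key1 r r', ite_mul, zero_mul])]
        rw [Finset.sum_ite_eq Finset.univ r
          (fun r' => ((4 * t).choose (2 * (r : ℕ) + 1) : k) * (x r * y r'))]
        rw [if_pos (Finset.mem_univ r)]
        ring
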